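/- At every solution of the mean field equations the two variational functionals agree and take the explicit value: if (μ1, μ2) ∈ (−1,1)² satisfies μ1 = tanh(J11 α μ1 + J12 (1−α) μ2 + h1) and μ2 = tanh(J12 α μ1 + J22 (1−α) μ2 + h2), then p_UP(μ1, μ2) = p_LOW(μ1, μ2) = −(1/2)·(J11 α² μ1² + 2 J12 α(1−α) μ1 μ2 + J22 (1−α)² μ2²) − (α/2)·log((1−μ1²)/4) − ((1−α)/2)·log((1−μ2²)/4). -/

import Mathlib

open Real Filter

noncomputable def spin (b : Bool) : ℝ := if b then 1 else -1

/-- Binary entropy term; `Real.log 0 = 0` gives the continuous extension `I(±1) = 0`. -/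
noncomputable def entI (μ : ℝ) : ℝ :=
  -((1 + μ) / 2) * Real.log ((1 + μ) / 2) - ((1 - μ) / 2) * Real.log ((1 - μ) / 2)

/-- The upper-bound variational functional `p_UP`. -/
noncomputable def pUP (J11 J12 J22 h1 h2 α μ1 μ2 : ℝ) : ℝ :=
  Real.log 2
    - (1 / 2) * (J11 * α ^ 2 * μ1 ^ 2 + 2 * J12 * α * (1 - α) * μ1 * μ2
        + J22 * (1 - α) ^ 2 * μ2 ^ 2)
    + α * Real.log (Real.cosh (J11 * α * μ1 + J12 * (1 - α) * μ2 + h1))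
    + (1 - α) * Real.log (Real.cosh (J12 * α * μ1 + J22 * (1 - α) * μ2 + h2))

/-- The lower-bound variational functional `p_LOW`. -/
noncomputable def pLOW (J11 J12 J22 h1 h2 α μ1 μ2 : ℝ) : ℝ :=
  (1 / 2) * (J11 * α ^ 2 * μ1 ^ 2 + 2 * J12 * α * (1 - α) * μ1 * μ2
      + J22 * (1 - α) ^ 2 * μ2 ^ 2)
    + α * h1 * μ1 + (1 - α) * h2 * μ2 + α * entI μ1 + (1 - α) * entI μ2

lemma log_one_add_tanh (x : ℝ) :
    Real.log (1 + Real.tanh x) = x - Real.log (Real.cosh x) := by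
  have hc := Real.cosh_pos x
  have h : 1 + Real.tanh x = Real.exp x / Real.cosh x := by
    rw [Real.tanh_eq_sinh_div_cosh]
    field_simp
    exact Real.cosh_add_sinh x
  rw [h, Real.log_div (Real.exp_ne_zero x) hc.ne', Real.log_exp]

lemma log_one_sub_tanh (x : ℝ) :
    Real.log (1 - Real.tanh x) = -x - Real.log (Real.cosh x) := by
  have hc := Real.cosh_pos x
  have h : 1 - Real.tanh x = Real.exp (-x) / Real.cosh x := by
    rw [Real.tanh_eq_sinh_div_cosh]
    field_simp
    exact Real.cosh_sub_sinh x
  rw [h, Real.log_div (Real.exp_ne_zero (-x)) hc.ne', Real.log_exp]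

/-- at every solution of the mean field equations the two
variational functionals agree and take the explicit value. -/
theorem pUP_eq_pLOW_at_mean_field_solutions
    (J11 J12 J22 h1 h2 α : ℝ) (hJ11 : 0 < J11) (hJ22 : 0 < J22)
    (hα : α ∈ Set.Ioo (0 : ℝ) 1)
    (μ1 μ2 : ℝ) (hμ1 : μ1 ∈ Set.Ioo (-1 : ℝ) 1) (hμ2 : μ2 ∈ Set.Ioo (-1 : ℝ) 1)
    (hmf1 : μ1 = Real.tanh (J11 * α * μ1 + J12 * (1 - α) * μ2 + h1))
    (hmf2 : μ2 = Real.tanh (J12 * α * μ1 + J22 * (1 - α) * μ2 + h2)) :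
    pUP J11 J12 J22 h1 h2 α μ1 μ2 = pLOW J11 J12 J22 h1 h2 α μ1 μ2 ∧
    pLOW J11 J12 J22 h1 h2 α μ1 μ2 =
      -(1 / 2) * (J11 * α ^ 2 * μ1 ^ 2 + 2 * J12 * α * (1 - α) * μ1 * μ2
          + J22 * (1 - α) ^ 2 * μ2 ^ 2)
        - (α / 2) * Real.log ((1 - μ1 ^ 2) / 4)
        - ((1 - α) / 2) * Real.log ((1 - μ2 ^ 2) / 4) := by
  obtain ⟨hμ1l, hμ1r⟩ := hμ1
  obtain ⟨hμ2l, hμ2r⟩ := hμ2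
  have hp1 : (0:ℝ) < 1 + μ1 := by linarith
  have hm1 : (0:ℝ) < 1 - μ1 := by linarith
  have hp2 : (0:ℝ) < 1 + μ2 := by linarith
  have hm2 : (0:ℝ) < 1 - μ2 := by linarith
  have a1 : Real.log (1 + μ1)
      = (J11 * α * μ1 + J12 * (1 - α) * μ2 + h1)
        - Real.log (Real.cosh (J11 * α * μ1 + J12 * (1 - α) * μ2 + h1)) := by
    conv_lhs => rw [hmf1]
    exact log_one_add_tanh _
  have b1 : Real.log (1 - μ1)
      = -(J11 * α * μ1 + J12 * (1 - α) * μ2 + h1)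
        - Real.log (Real.cosh (J11 * α * μ1 + J12 * (1 - α) * μ2 + h1)) := by
    conv_lhs => rw [hmf1]
    exact log_one_sub_tanh _
  have a2 : Real.log (1 + μ2)
      = (J12 * α * μ1 + J22 * (1 - α) * μ2 + h2)
        - Real.log (Real.cosh (J12 * α * μ1 + J22 * (1 - α) * μ2 + h2)) := by
    conv_lhs => rw [hmf2]
    exact log_one_add_tanh _
  have b2 : Real.log (1 - μ2)
      = -(J12 * α * μ1 + J22 * (1 - α) * μ2 + h2)
        - Real.log (Real.cosh (J12 * α * μ1 + J22 * (1 - α) * μ2 + h2)) := by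
    conv_lhs => rw [hmf2]
    exact log_one_sub_tanh _
  have p1 : Real.log ((1 + μ1) / 2) = Real.log (1 + μ1) - Real.log 2 :=
    Real.log_div hp1.ne' two_ne_zero
  have q1 : Real.log ((1 - μ1) / 2) = Real.log (1 - μ1) - Real.log 2 :=
    Real.log_div hm1.ne' two_ne_zero
  have p2 : Real.log ((1 + μ2) / 2) = Real.log (1 + μ2) - Real.log 2 :=
    Real.log_div hp2.ne' two_ne_zero
  have q2 : Real.log ((1 - μ2) / 2) = Real.log (1 - μ2) - Real.log 2 :=
    Real.log_div hm2.ne' two_ne_zero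
  have r1 : Real.log ((1 - μ1 ^ 2) / 4)
      = Real.log ((1 + μ1) / 2) + Real.log ((1 - μ1) / 2) := by
    have h : (1 - μ1 ^ 2) / 4 = ((1 + μ1) / 2) * ((1 - μ1) / 2) := by ring
    rw [h, Real.log_mul (by positivity) (by positivity)]
  have r2 : Real.log ((1 - μ2 ^ 2) / 4)
      = Real.log ((1 + μ2) / 2) + Real.log ((1 - μ2) / 2) := by
    have h : (1 - μ2 ^ 2) / 4 = ((1 + μ2) / 2) * ((1 - μ2) / 2) := by ring
    rw [h, Real.log_mul (by positivity) (by positivity)]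
  constructor
  · simp only [pUP, pLOW, entI]
    rw [p1, q1, p2, q2, a1, b1, a2, b2]
    ring
  · simp only [pLOW, entI]
    rw [r1, r2, p1, q1, p2, q2, a1, b1, a2, b2]
    ring
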